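/- There is no map f from a subset U of the unit sphere with nonempty interior to the Euclidean plane that preserves distances up to a scale factor, i.e., there is no f : U → ℝ² and constant c > 0 such that dist(f(x), f(y)) = c · d_S(x, y) for all x, y ∈ U, where d_S is the intrinsic spherical distance. -/

import Mathlib

open Real

private lemma mono_aux {F F' : ℝ → ℝ} (hF : ∀ x, HasDerivAt F (F' x) x)
    (hF' : ∀ x, 0 ≤ x → 0 ≤ F' x) (h0 : F 0 = 0) {x : ℝ} (hx : 0 ≤ x) : 0 ≤ F x := by
  have hmono : MonotoneOn F (Set.Ici 0) := by
    apply monotoneOn_of_deriv_nonneg (convex_Ici 0)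
    · exact fun y _ => (hF y).continuousAt.continuousWithinAt
    · exact fun y _ => ((hF y).differentiableAt).differentiableWithinAt
    · intro y hy
      rw [(hF y).deriv]
      refine hF' y ?_
      rw [interior_Ici] at hy
      exact le_of_lt hy
  have := hmono Set.self_mem_Ici hx hx
  linarith

private lemma sin_lb {x : ℝ} (hx : 0 ≤ x) : x - x^3/6 ≤ Real.sin x := by
  have h := mono_aux (F := fun x => Real.sin x - (x - x^3/6))
    (F' := fun x => Real.cos x - (1 - x^2/2)) ?_ ?_ (by norm_num) hx
  · linarith
  · intro y
    have h1 : HasDerivAt (fun x : ℝ => x - x^3/6) (1 - 3*y^2/6) y := by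
      have := ((hasDerivAt_id y).sub ((hasDerivAt_pow 3 y).div_const 6))
      exact this.congr_deriv (by ring)
    have := (Real.hasDerivAt_sin y).sub h1
    exact this.congr_deriv (by ring)
  · intro y _
    have := Real.one_sub_sq_div_two_le_cos (x := y)
    linarith

private lemma cos_ub {x : ℝ} (hx : 0 ≤ x) : Real.cos x ≤ 1 - x^2/2 + x^4/24 := by
  have h := mono_aux (F := fun x => (1 - x^2/2 + x^4/24) - Real.cos x)
    (F' := fun x => (x - x^3/6) * (-1) + Real.sin x) ?_ ?_ (by norm_num) hx
  · linarith
  · intro y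
    have h1 : HasDerivAt (fun x : ℝ => 1 - x^2/2 + x^4/24) (-(2*y^1)/2 + 4*y^3/24) y := by
      have := (((hasDerivAt_pow 2 y).div_const 2).const_sub 1).add ((hasDerivAt_pow 4 y).div_const 24)
      exact this.congr_deriv (by ring)
    have := h1.sub (Real.hasDerivAt_cos y)
    exact this.congr_deriv (by ring)
  · intro y hy
    have := sin_lb hy
    nlinarith

private lemma sin_ub {x : ℝ} (hx : 0 ≤ x) : Real.sin x ≤ x - x^3/6 + x^5/120 := by
  have h := mono_aux (F := fun x => (x - x^3/6 + x^5/120) - Real.sin x)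
    (F' := fun x => (1 - x^2/2 + x^4/24) - Real.cos x) ?_ ?_ (by norm_num) hx
  · linarith
  · intro y
    have h1 : HasDerivAt (fun x : ℝ => x - x^3/6 + x^5/120) (1 - 3*y^2/6 + 5*y^4/120) y := by
      have := ((hasDerivAt_id y).sub ((hasDerivAt_pow 3 y).div_const 6)).add
        ((hasDerivAt_pow 5 y).div_const 120)
      exact this.congr_deriv (by ring)
    have := h1.sub (Real.hasDerivAt_sin y)
    exact this.congr_deriv (by ring)
  · intro y hy
    have := cos_ub hy
    linarith

private lemma cos_lb {x : ℝ} (hx : 0 ≤ x) :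
    1 - x^2/2 + x^4/24 - x^6/720 ≤ Real.cos x := by
  have h := mono_aux (F := fun x => Real.cos x - (1 - x^2/2 + x^4/24 - x^6/720))
    (F' := fun x => (x - x^3/6 + x^5/120) - Real.sin x) ?_ ?_ (by norm_num) hx
  · linarith
  · intro y
    have h1 : HasDerivAt (fun x : ℝ => 1 - x^2/2 + x^4/24 - x^6/720)
        (-(2*y^1)/2 + 4*y^3/24 - 6*y^5/720) y := by
      have := ((((hasDerivAt_pow 2 y).div_const 2).const_sub 1).add
        ((hasDerivAt_pow 4 y).div_const 24)).sub ((hasDerivAt_pow 6 y).div_const 720)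
      exact this.congr_deriv (by ring)
    have := (Real.hasDerivAt_cos y).sub h1
    exact this.congr_deriv (by ring)
  · intro y hy
    have := sin_ub hy
    linarith

private lemma key_ineq {r : ℝ} (hr : 0 < r) (hr1 : r ≤ 1) :
    Real.cos (Real.sqrt 2 * r) < Real.cos r ^ 2 := by
  have hs : (Real.sqrt 2) ^ 2 = 2 := Real.sq_sqrt (by norm_num)
  have hs0 : 0 ≤ Real.sqrt 2 := Real.sqrt_nonneg 2
  have h1 : 1 - (2*r)^2/2 + (2*r)^4/24 - (2*r)^6/720 ≤ Real.cos (2*r) :=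
    cos_lb (by linarith)
  have h2 : Real.cos (Real.sqrt 2 * r) ≤ 1 - (Real.sqrt 2 * r)^2/2 + (Real.sqrt 2 * r)^4/24 :=
    cos_ub (by positivity)
  have hcs : Real.cos r ^ 2 = 1/2 + Real.cos (2*r)/2 := Real.cos_sq r
  have e1 : (Real.sqrt 2 * r)^2 = 2 * r^2 := by rw [mul_pow, hs]
  have e2 : (Real.sqrt 2 * r)^4 = 4 * r^4 := by
    have : (Real.sqrt 2 * r)^4 = ((Real.sqrt 2 * r)^2)^2 := by ring
    rw [this, e1]; ring
  rw [hcs]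
  rw [e1, e2] at h2
  have h64 : r^6 ≤ r^4 := pow_le_pow_of_le_one hr.le hr1 (by norm_num)
  nlinarith [pow_pos hr 4]


private lemma median_eq (A B X : EuclideanSpace ℝ (Fin 2)) :
    dist X A ^ 2 + dist X B ^ 2
      = 2 * dist X ((2⁻¹ : ℝ) • (A + B)) ^ 2 + dist A B ^ 2 / 2 := by
  have h := parallelogram_law_with_norm ℝ (X - A) (X - B)
  have e1 : X - A + (X - B) = (2:ℝ) • (X - (2⁻¹ : ℝ) • (A + B)) := by module
  have e2 : X - A - (X - B) = B - A := by abel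
  rw [e1, e2, norm_smul] at h
  simp only [Real.norm_ofNat] at h
  simp only [dist_eq_norm]
  rw [norm_sub_rev A B]
  nlinarith [norm_nonneg (X - (2⁻¹ : ℝ) • (A + B)), norm_nonneg (B - A)]


/-- Intrinsic (geodesic) distance on the unit sphere in `ℝ³`. -/
noncomputable def sphereDist (x y : EuclideanSpace ℝ (Fin 3)) : ℝ :=
  Real.arccos (inner ℝ x y : ℝ)


set_option maxHeartbeats 2000000 in
theorem no_scaled_isometry_of_sphere_subset
    (U : Set (EuclideanSpace ℝ (Fin 3)))
    (hU : U ⊆ Metric.sphere (0 : EuclideanSpace ℝ (Fin 3)) 1)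
    (hint : ∃ x ∈ U, ∃ ε > (0 : ℝ),
      ∀ y ∈ Metric.sphere (0 : EuclideanSpace ℝ (Fin 3)) 1, dist y x < ε → y ∈ U)
    (f : EuclideanSpace ℝ (Fin 3) → EuclideanSpace ℝ (Fin 2)) :
    ¬ ∃ c > (0 : ℝ), ∀ x ∈ U, ∀ y ∈ U, dist (f x) (f y) = c * sphereDist x y := by
  rintro ⟨c, hc, hf⟩
  simp only [sphereDist] at hf
  obtain ⟨x₀, hx₀U, ε, hε, hball⟩ := hint
  set r : ℝ := min (ε / 2) 1 with hrdef
  have hr0 : 0 < r := lt_min (by linarith) one_pos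
  have hr1 : r ≤ 1 := min_le_right _ _
  have hrε : r < ε := lt_of_le_of_lt (min_le_left _ _) (by linarith)
  -- x₀ is a unit vector
  have hx₀ : ‖x₀‖ = 1 := by simpa using hU hx₀U
  -- extend to an orthonormal basis
  have hONS : Orthonormal ℝ (Set.restrict {(0 : Fin 3)} (fun _ => x₀)) := by
    refine ⟨fun i => hx₀, ?_⟩
    intro i j hij
    exact absurd (Subtype.ext (i.2.trans j.2.symm)) hij
  obtain ⟨b, hb⟩ := hONS.exists_orthonormalBasis_extension_of_card_eq (by simp)
  have hb0 : b 0 = x₀ := hb 0 rfl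
  have hon := orthonormal_iff_ite.mp b.orthonormal
  -- basic inner products
  have hxx : (inner ℝ x₀ x₀ : ℝ) = 1 := by
    rw [real_inner_self_eq_norm_sq, hx₀]; norm_num
  have hxu : (inner ℝ x₀ (b 1) : ℝ) = 0 := by rw [← hb0]; simpa using hon 0 1
  have hux : (inner ℝ (b 1) x₀ : ℝ) = 0 := by rw [← hb0]; simpa using hon 1 0
  have hxv : (inner ℝ x₀ (b 2) : ℝ) = 0 := by rw [← hb0]; simpa using hon 0 2
  have hvx : (inner ℝ (b 2) x₀ : ℝ) = 0 := by rw [← hb0]; simpa using hon 2 0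
  have huu : (inner ℝ (b 1) (b 1) : ℝ) = 1 := by simpa using hon 1 1
  have hvv : (inner ℝ (b 2) (b 2) : ℝ) = 1 := by simpa using hon 2 2
  have huv : (inner ℝ (b 1) (b 2) : ℝ) = 0 := by simpa using hon 1 2
  have hvu : (inner ℝ (b 2) (b 1) : ℝ) = 0 := by simpa using hon 2 1
  -- the four points
  obtain ⟨q1, hq1def⟩ : ∃ q : EuclideanSpace ℝ (Fin 3),
      q = Real.cos r • x₀ + Real.sin r • b 1 := ⟨_, rfl⟩
  obtain ⟨q2, hq2def⟩ : ∃ q : EuclideanSpace ℝ (Fin 3),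
      q = Real.cos r • x₀ - Real.sin r • b 1 := ⟨_, rfl⟩
  obtain ⟨q3, hq3def⟩ : ∃ q : EuclideanSpace ℝ (Fin 3),
      q = Real.cos r • x₀ + Real.sin r • b 2 := ⟨_, rfl⟩
  have hpyth : Real.sin r ^ 2 + Real.cos r ^ 2 = 1 := Real.sin_sq_add_cos_sq r
  -- inner products among the points
  have i1 : (inner ℝ x₀ q1 : ℝ) = Real.cos r := by
    simp only [hq1def, inner_add_right, real_inner_smul_right, hxx, hxu]; ring
  have i2 : (inner ℝ x₀ q2 : ℝ) = Real.cos r := by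
    simp only [hq2def, inner_sub_right, real_inner_smul_right, hxx, hxu]; ring
  have i3 : (inner ℝ x₀ q3 : ℝ) = Real.cos r := by
    simp only [hq3def, inner_add_right, real_inner_smul_right, hxx, hxv]; ring
  have i12 : (inner ℝ q1 q2 : ℝ) = Real.cos r ^ 2 - Real.sin r ^ 2 := by
    simp only [hq1def, hq2def, inner_add_left, inner_sub_right, real_inner_smul_left,
      real_inner_smul_right, hxx, hxu, hux, huu]; ring
  have i31 : (inner ℝ q3 q1 : ℝ) = Real.cos r ^ 2 := by
    simp only [hq1def, hq3def, inner_add_left, inner_add_right, real_inner_smul_left,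
      real_inner_smul_right, hxx, hxu, hvx, hvu]; ring
  have i32 : (inner ℝ q3 q2 : ℝ) = Real.cos r ^ 2 := by
    simp only [hq2def, hq3def, inner_add_left, inner_sub_right, real_inner_smul_left,
      real_inner_smul_right, hxx, hxu, hvx, hvu]; ring
  have i11 : (inner ℝ q1 q1 : ℝ) = 1 := by
    simp only [hq1def, inner_add_left, inner_add_right, real_inner_smul_left,
      real_inner_smul_right, hxx, hxu, hux, huu]; nlinarith
  have i22 : (inner ℝ q2 q2 : ℝ) = 1 := by
    simp only [hq2def, inner_sub_left, inner_sub_right, real_inner_smul_left,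
      real_inner_smul_right, hxx, hxu, hux, huu]; nlinarith
  have i33 : (inner ℝ q3 q3 : ℝ) = 1 := by
    simp only [hq3def, inner_add_left, inner_add_right, real_inner_smul_left,
      real_inner_smul_right, hxx, hxv, hvx, hvv]; nlinarith
  -- points are on the sphere
  have hsphere : ∀ q : EuclideanSpace ℝ (Fin 3), (inner ℝ q q : ℝ) = 1 →
      q ∈ Metric.sphere (0 : EuclideanSpace ℝ (Fin 3)) 1 := by
    intro q hq
    rw [mem_sphere_zero_iff_norm]
    have h2 : ‖q‖ ^ 2 = 1 := by rw [← real_inner_self_eq_norm_sq]; exact hq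
    nlinarith [norm_nonneg q]
  -- points are in U
  have hmem : ∀ q : EuclideanSpace ℝ (Fin 3), (inner ℝ q q : ℝ) = 1 →
      (inner ℝ x₀ q : ℝ) = Real.cos r → q ∈ U := by
    intro q hq hxq
    refine hball q (hsphere q hq) ?_
    have hd2 : dist q x₀ ^ 2 = 2 - 2 * Real.cos r := by
      have h' : (inner ℝ q x₀ : ℝ) = Real.cos r := by rw [real_inner_comm]; exact hxq
      rw [dist_eq_norm, ← real_inner_self_eq_norm_sq]
      simp only [inner_sub_left, inner_sub_right, hq, hxx, h', hxq]
      ring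
    have hcosr : 1 - r ^ 2 / 2 ≤ Real.cos r := Real.one_sub_sq_div_two_le_cos
    have : dist q x₀ ^ 2 ≤ r ^ 2 := by rw [hd2]; linarith
    nlinarith [dist_nonneg (x := q) (y := x₀)]
  have hq1U : q1 ∈ U := hmem q1 i11 i1
  have hq2U : q2 ∈ U := hmem q2 i22 i2
  have hq3U : q3 ∈ U := hmem q3 i33 i3
  -- spherical distances
  have hπ : (3 : ℝ) < Real.pi := Real.pi_gt_three
  have a1 : Real.arccos (inner ℝ x₀ q1 : ℝ) = r := by
    rw [i1, Real.arccos_cos hr0.le (by linarith)]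
  have a2 : Real.arccos (inner ℝ x₀ q2 : ℝ) = r := by
    rw [i2, Real.arccos_cos hr0.le (by linarith)]
  have a3 : Real.arccos (inner ℝ x₀ q3 : ℝ) = r := by
    rw [i3, Real.arccos_cos hr0.le (by linarith)]
  have a12 : Real.arccos (inner ℝ q1 q2 : ℝ) = 2 * r := by
    rw [i12]
    have : Real.cos r ^ 2 - Real.sin r ^ 2 = Real.cos (2 * r) := by
      rw [Real.cos_two_mul]; nlinarith
    rw [this, Real.arccos_cos (by linarith) (by linarith)]
  obtain ⟨D, hDdef⟩ : ∃ D : ℝ, D = Real.arccos (Real.cos r ^ 2) := ⟨_, rfl⟩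
  have a31 : Real.arccos (inner ℝ q3 q1 : ℝ) = D := by rw [i31, hDdef]
  have a32 : Real.arccos (inner ℝ q3 q2 : ℝ) = D := by rw [i32, hDdef]
  -- distances in the plane
  have hPA : dist (f x₀) (f q1) = c * r := by rw [hf x₀ hx₀U q1 hq1U, a1]
  have hPB : dist (f x₀) (f q2) = c * r := by rw [hf x₀ hx₀U q2 hq2U, a2]
  have hPC : dist (f x₀) (f q3) = c * r := by rw [hf x₀ hx₀U q3 hq3U, a3]
  have hAB : dist (f q1) (f q2) = c * (2 * r) := by rw [hf q1 hq1U q2 hq2U, a12]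
  have hCA : dist (f q3) (f q1) = c * D := by rw [hf q3 hq3U q1 hq1U, a31]
  have hCB : dist (f q3) (f q2) = c * D := by rw [hf q3 hq3U q2 hq2U, a32]
  -- P is the midpoint of A and B
  obtain ⟨M, hMdef⟩ : ∃ M : EuclideanSpace ℝ (Fin 2),
      M = (2⁻¹ : ℝ) • (f q1 + f q2) := ⟨_, rfl⟩
  have hmed1 := median_eq (f q1) (f q2) (f x₀)
  rw [hPA, hPB, hAB] at hmed1
  have hPM : dist (f x₀) M = 0 := by
    have h0 : dist (f x₀) M ^ 2 = 0 := by
      rw [← hMdef] at hmed1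
      linear_combination (-1/2 : ℝ) * hmed1
    exact (pow_eq_zero_iff two_ne_zero).mp h0
  have hPMeq : f x₀ = M := by rwa [dist_eq_zero] at hPM
  -- the median identity at C
  have hmed2 := median_eq (f q1) (f q2) (f q3)
  have hCM : dist (f q3) M = c * r := by rw [← hPMeq, dist_comm]; exact hPC
  rw [hCA, hCB, hAB, ← hMdef, hCM] at hmed2
  -- hence D ^ 2 = 2 r ^ 2
  have hD2 : D ^ 2 = 2 * r ^ 2 := by
    have h : c ^ 2 * D ^ 2 = c ^ 2 * (2 * r ^ 2) := by linear_combination (1/2 : ℝ) * hmed2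
    exact mul_left_cancel₀ (pow_ne_zero 2 hc.ne') h
  -- but D < sqrt 2 * r
  have hkey : Real.cos (Real.sqrt 2 * r) < Real.cos r ^ 2 := key_ineq hr0 hr1
  have hs2 : Real.sqrt 2 ≤ 2 := by
    have h4 : Real.sqrt 2 ≤ Real.sqrt 4 := Real.sqrt_le_sqrt (by norm_num)
    have h4' : Real.sqrt 4 = 2 := by
      rw [show (4:ℝ) = 2 ^ 2 by norm_num, Real.sqrt_sq (by norm_num : (0:ℝ) ≤ 2)]
    rw [h4'] at h4; exact h4
  have hs0 : 0 ≤ Real.sqrt 2 := Real.sqrt_nonneg 2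
  have hsr : Real.sqrt 2 * r ≤ Real.pi :=
    le_trans (le_trans (by calc Real.sqrt 2 * r ≤ Real.sqrt 2 * 1 :=
        mul_le_mul_of_nonneg_left hr1 hs0
      _ = Real.sqrt 2 := mul_one _) hs2) (le_trans (by norm_num) hπ.le)
  have hDlt : D < Real.sqrt 2 * r := by
    have hmem1 : Real.cos (Real.sqrt 2 * r) ∈ Set.Icc (-1 : ℝ) 1 :=
      ⟨Real.neg_one_le_cos _, Real.cos_le_one _⟩
    have hmem2 : Real.cos r ^ 2 ∈ Set.Icc (-1 : ℝ) 1 :=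
      ⟨le_trans (by norm_num) (sq_nonneg _),
        (sq_le_one_iff_abs_le_one (Real.cos r)).mpr (Real.abs_cos_le_one r)⟩
    have := Real.strictAntiOn_arccos hmem1 hmem2 hkey
    rw [hDdef]
    rwa [Real.arccos_cos (by positivity) hsr] at this
  have hD0 : 0 ≤ D := hDdef ▸ Real.arccos_nonneg _
  have e : (Real.sqrt 2 * r) ^ 2 = 2 * r ^ 2 := by
    rw [mul_pow, Real.sq_sqrt]; norm_num
  have hfin : D ^ 2 < 2 * r ^ 2 := by
    rw [← e]; exact pow_lt_pow_left₀ hDlt hD0 two_ne_zero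
  rw [hD2] at hfin
  exact lt_irrefl _ hfin
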